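/- There exist a finite connected non-complete graph G₁ that is not super connected and a finite disconnected graph G₂ with at least one isolated vertex such that the lexicographic product G₁∘G₂ is not super connected. Specifically, one may take G₁ to be the graph on vertices {x₁,x₂,x₃,x₄,x₅} with edges {x₁x₂, x₁x₃, x₂x₃, x₂x₄, x₂x₅, x₄x₅}, and G₂ the graph on vertices {y₁,y₂,y₃} with the single edge y₁y₂ (so y₃ is isolated); then the set {(x₂,y₁), (x₂,y₂), (x₂,y₃)} is a minimum vertex-cut of G₁∘G₂ that isolates no vertex. -/

import Mathlib

/-- The lexicographic product of two simple graphs: `(x₁,y₁)` is adjacent to `(x₂,y₂)`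
iff `x₁x₂` is an edge of `G`, or `x₁ = x₂` and `y₁y₂` is an edge of `H`. -/
def lexProd {V W : Type*} (G : SimpleGraph V) (H : SimpleGraph W) :
    SimpleGraph (V × W) where
  Adj p q := G.Adj p.1 q.1 ∨ (p.1 = q.1 ∧ H.Adj p.2 q.2)
  symm := by
    constructor
    rintro ⟨x₁, y₁⟩ ⟨x₂, y₂⟩ (h | ⟨rfl, h⟩)
    · exact Or.inl h.symm
    · exact Or.inr ⟨rfl, h.symm⟩
  loopless := by
    constructor
    rintro ⟨x, y⟩ (h | ⟨-, h⟩)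
    · exact G.loopless.irrefl x h
    · exact H.loopless.irrefl y h

/-- The set `V₀(G)` of isolated vertices of `G`. -/
def isoSet {V : Type*} (G : SimpleGraph V) : Set V := {v | ∀ w, ¬ G.Adj v w}

/-- The set of vertices of `G − S` that are isolated in `G − S`,
i.e. `V₀(G − S)` regarded as a subset of the vertices of `G`. -/
def isolatedAfter {V : Type*} (G : SimpleGraph V) (S : Set V) : Set V :=
  {v | v ∉ S ∧ ∀ w ∉ S, ¬ G.Adj v w}

/-- `S` is a vertex-cut of `G`: deleting `S` leaves a disconnected graph, or reduces `G`
to the trivial one-vertex graph `K₁`. -/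
def IsVertexCut {V : Type*} (G : SimpleGraph V) (S : Set V) : Prop :=
  (Sᶜ.Nonempty ∧ ¬ (G.induce Sᶜ).Connected) ∨ (∃ v, Sᶜ = {v})

/-- The connectivity `κ(G)`: the minimum cardinality of a vertex-cut of `G`. -/
noncomputable def graphConnectivity {V : Type*} (G : SimpleGraph V) : ℕ :=
  sInf {n | ∃ S : Set V, IsVertexCut G S ∧ S.ncard = n}

/-- A minimum vertex-cut: a vertex-cut of cardinality `κ(G)`. -/
def IsMinVertexCut {V : Type*} (G : SimpleGraph V) (S : Set V) : Prop :=
  IsVertexCut G S ∧ S.ncard = graphConnectivity G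

/-- A k₁-vertex-cut: a vertex-cut `S` such that `G − S` has no isolated vertices. -/
def IsK1VertexCut {V : Type*} (G : SimpleGraph V) (S : Set V) : Prop :=
  IsVertexCut G S ∧ ∀ v ∉ S, ∃ w ∉ S, G.Adj v w

/-- The k₁-connectivity `k₁(G)`, valued in `ℕ∞`; it is `⊤` (infinity) if `G`
has no k₁-vertex-cut. -/
noncomputable def k1Connectivity {V : Type*} (G : SimpleGraph V) : ℕ∞ :=
  sInf {n : ℕ∞ | ∃ S : Set V, IsK1VertexCut G S ∧ (S.ncard : ℕ∞) = n}

/-- `G` is super connected if every minimum vertex-cut isolates a vertex,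
i.e. some vertex of `G − S` has no neighbours in `G − S`. -/
def SuperConnected {V : Type*} (G : SimpleGraph V) : Prop :=
  ∀ S : Set V, IsMinVertexCut G S → ∃ v ∉ S, ∀ w ∉ S, ¬ G.Adj v w

/-- The graph on `{x₁, …, x₅}` (here `0, …, 4`) with edges
`x₁x₂, x₁x₃, x₂x₃, x₂x₄, x₂x₅, x₄x₅`. -/
def Gex₁ : SimpleGraph (Fin 5) :=
  SimpleGraph.fromRel (fun a b =>
    (a = 0 ∧ b = 1) ∨ (a = 0 ∧ b = 2) ∨ (a = 1 ∧ b = 2) ∨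
    (a = 1 ∧ b = 3) ∨ (a = 1 ∧ b = 4) ∨ (a = 3 ∧ b = 4))

/-- The graph on `{y₁, y₂, y₃}` (here `0, 1, 2`) with the single edge `y₁y₂`,
so `y₃` is isolated. -/
def Gex₂ : SimpleGraph (Fin 3) :=
  SimpleGraph.fromRel (fun a b => a = 0 ∧ b = 1)

/-! ### Auxiliary lemmas -/

section Aux

instance : DecidableRel Gex₁.Adj := fun a b =>
  decidable_of_iff _ (SimpleGraph.fromRel_adj _ a b).symm

instance : DecidableRel Gex₂.Adj := fun a b =>
  decidable_of_iff _ (SimpleGraph.fromRel_adj _ a b).symm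

instance {V W : Type*} (G : SimpleGraph V) (H : SimpleGraph W)
    [DecidableRel G.Adj] [DecidableRel H.Adj] [DecidableEq V] :
    DecidableRel (lexProd G H).Adj := fun _ _ =>
  inferInstanceAs (Decidable (_ ∨ _ ∧ _))

/-- Walk-invariance: a predicate closed under adjacency propagates along walks. -/
lemma walk_inv {V : Type*} {G : SimpleGraph V} {P : V → Prop}
    (h : ∀ x y, P x → G.Adj x y → P y) : ∀ {a b : V}, G.Walk a b → P a → P b := by
  intro a b w
  induction w with
  | nil => exact id
  | cons adj _ ih => exact fun ha => ih (h _ _ ha adj)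

lemma reach_inv {V : Type*} {G : SimpleGraph V} {P : V → Prop}
    (h : ∀ x y, P x → G.Adj x y → P y) {a b : V} (hr : G.Reachable a b) (ha : P a) : P b :=
  hr.elim fun w => walk_inv h w ha

lemma connected_of_reach_to {V : Type*} {G : SimpleGraph V} (h : V)
    (hr : ∀ v, G.Reachable v h) : G.Connected := by
  have : Nonempty V := ⟨h⟩
  exact ⟨fun a b => (hr a).trans (hr b).symm⟩

lemma exists_not_mem_of_ncard_le_two {α : Type*} [Finite α] {S : Set α} (hS : S.ncard ≤ 2)
    {a b c : α} (hab : a ≠ b) (hac : a ≠ c) (hbc : b ≠ c) :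
    a ∉ S ∨ b ∉ S ∨ c ∉ S := by
  by_contra h
  push_neg at h
  obtain ⟨ha, hb, hc⟩ := h
  have hsub : ({a, b, c} : Set α) ⊆ S := by
    intro x hx
    rcases hx with rfl | rfl | rfl <;> assumption
  have h3 : ({a, b, c} : Set α).ncard = 3 :=
    Set.ncard_eq_three.mpr ⟨a, b, c, hab, hac, hbc, rfl⟩
  have := Set.ncard_le_ncard hsub S.toFinite
  omega

lemma gex₁_hub : ∀ x : Fin 5, x ≠ 1 → Gex₁.Adj 1 x := by decide

lemma gex₁_partner : ∀ a : Fin 5, a ≠ 1 → ∃ b, b ≠ 1 ∧ Gex₁.Adj a b := by decide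

lemma gex₁_closed : ∀ a b : Fin 5, a ≠ 1 → b ≠ 1 → (a = 0 ∨ a = 2) → Gex₁.Adj a b →
    (b = 0 ∨ b = 2) := by decide

lemma gex₁_connected : Gex₁.Connected := by
  apply connected_of_reach_to (1 : Fin 5)
  intro v
  by_cases hv : v = 1
  · exact hv ▸ SimpleGraph.Reachable.refl _
  · exact (gex₁_hub v hv).symm.reachable

/-- `{1}` is a vertex cut of `Gex₁`. -/
lemma gex₁_cut : IsVertexCut Gex₁ ({1} : Set (Fin 5)) := by
  left
  constructor
  · exact ⟨0, by simp⟩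
  · intro hc
    have h03 : (Gex₁.induce ({1} : Set (Fin 5))ᶜ).Reachable
        ⟨0, by simp⟩ ⟨3, by simp⟩ := hc.preconnected _ _
    have := reach_inv (P := fun v : ↥(({1} : Set (Fin 5))ᶜ) => v.val = 0 ∨ v.val = 2)
      (fun x y hx hadj => gex₁_closed x.val y.val x.property y.property hx hadj)
      h03 (Or.inl rfl)
    exact absurd this (by decide)

lemma gex₁_kappa : graphConnectivity Gex₁ = 1 := by
  have hmem : 1 ∈ {n | ∃ S : Set (Fin 5), IsVertexCut Gex₁ S ∧ S.ncard = n} :=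
    ⟨{1}, gex₁_cut, Set.ncard_singleton 1⟩
  refine le_antisymm (Nat.sInf_le hmem) (le_csInf ⟨1, hmem⟩ ?_)
  rintro n ⟨S, hcut, rfl⟩
  rw [Nat.one_le_iff_ne_zero]
  intro h0
  have hS : S = ∅ := (Set.ncard_eq_zero S.toFinite).mp h0
  subst hS
  rcases hcut with ⟨-, hnc⟩ | ⟨v, hv⟩
  · apply hnc
    apply connected_of_reach_to (⟨1, by simp⟩ : ↥((∅ : Set (Fin 5))ᶜ))
    intro ⟨x, hx⟩
    by_cases hv : x = 1
    · subst hv; exact SimpleGraph.Reachable.refl _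
    · exact SimpleGraph.Reachable.symm
        (SimpleGraph.Adj.reachable (by exact gex₁_hub x hv))
  · have h0 : (0 : Fin 5) ∈ (∅ : Set (Fin 5))ᶜ := by simp
    have h2 : (2 : Fin 5) ∈ (∅ : Set (Fin 5))ᶜ := by simp
    rw [hv] at h0 h2
    simp only [Set.mem_singleton_iff] at h0 h2
    exact absurd (h0.trans h2.symm) (by decide)

lemma gex₁_min_cut : IsMinVertexCut Gex₁ ({1} : Set (Fin 5)) :=
  ⟨gex₁_cut, by rw [gex₁_kappa]; exact Set.ncard_singleton 1⟩

lemma gex₁_not_super : ¬ SuperConnected Gex₁ := by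
  intro h
  obtain ⟨v, hv, hiso⟩ := h _ gex₁_min_cut
  simp only [Set.mem_singleton_iff] at hv
  obtain ⟨b, hb, hadj⟩ := gex₁_partner v hv
  exact hiso b (by simpa using hb) hadj

lemma gex₂_iso : ∀ w : Fin 3, ¬ Gex₂.Adj 2 w := by decide

lemma gex₂_not_connected : ¬ Gex₂.Connected := by
  intro h
  have hr : Gex₂.Reachable 2 0 := h.preconnected _ _
  have := reach_inv (P := fun v : Fin 3 => v = 2)
    (fun x y hx hadj => absurd (hx ▸ hadj) (gex₂_iso y)) hr rfl
  exact absurd this (by decide)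

/-! ### The lexicographic product -/

abbrev Slex : Set (Fin 5 × Fin 3) := {1} ×ˢ (Set.univ : Set (Fin 3))

lemma mem_Slex_iff (p : Fin 5 × Fin 3) : p ∈ Slex ↔ p.1 = 1 := by
  simp only [Slex, Set.mem_prod, Set.mem_singleton_iff, Set.mem_univ, and_true]

lemma Slex_ncard : Slex.ncard = 3 := by
  have : Slex = {((1 : Fin 5), (0 : Fin 3)), (1, 1), (1, 2)} := by
    ext ⟨x, y⟩
    simp only [mem_Slex_iff, Set.mem_insert_iff, Set.mem_singleton_iff, Prod.mk.injEq]
    constructor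
    · rintro rfl; fin_cases y <;> simp
    · rintro (⟨rfl, -⟩ | ⟨rfl, -⟩ | ⟨rfl, -⟩) <;> rfl
  rw [this]
  exact Set.ncard_eq_three.mpr ⟨_, _, _, by decide, by decide, by decide, rfl⟩

lemma lex_closed : ∀ a b : Fin 5 × Fin 3, a.1 ≠ 1 → b.1 ≠ 1 →
    (a.1 = 0 ∨ a.1 = 2) → (lexProd Gex₁ Gex₂).Adj a b → (b.1 = 0 ∨ b.1 = 2) := by
  rintro a b ha hb hx (h | ⟨h, -⟩)
  · exact gex₁_closed a.1 b.1 ha hb hx h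
  · exact h ▸ hx

lemma lex_cut : IsVertexCut (lexProd Gex₁ Gex₂) Slex := by
  left
  constructor
  · exact ⟨(0, 0), by simp [mem_Slex_iff]⟩
  · intro hc
    have hmem0 : ((0 : Fin 5), (0 : Fin 3)) ∈ Slexᶜ := by simp [mem_Slex_iff]
    have hmem3 : ((3 : Fin 5), (0 : Fin 3)) ∈ Slexᶜ := by simp [mem_Slex_iff]
    have h03 : ((lexProd Gex₁ Gex₂).induce Slexᶜ).Reachable
        ⟨_, hmem0⟩ ⟨_, hmem3⟩ := hc.preconnected _ _
    have := reach_inv (P := fun v : ↥(Slexᶜ) => v.val.1 = 0 ∨ v.val.1 = 2)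
      (fun x y hx hadj => lex_closed x.val y.val
        (fun h1 => x.property ((mem_Slex_iff _).mpr h1))
        (fun h1 => y.property ((mem_Slex_iff _).mpr h1)) hx hadj)
      h03 (Or.inl rfl)
    simp only at this
    rcases this with h | h <;> exact absurd h (by decide)

/-- Removing at most 2 vertices from the lexicographic product leaves it connected. -/
lemma lex_small_connected (S : Set (Fin 5 × Fin 3)) (hS : S.ncard ≤ 2) :
    ((lexProd Gex₁ Gex₂).induce Sᶜ).Connected := by
  -- a hub in column 1 survives
  obtain ⟨y, hy⟩ : ∃ y : Fin 3, ((1 : Fin 5), y) ∉ S := by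
    rcases exists_not_mem_of_ncard_le_two hS
      (a := ((1 : Fin 5), (0 : Fin 3))) (b := (1, 1)) (c := (1, 2))
      (by decide) (by decide) (by decide) with h | h | h
    · exact ⟨0, h⟩
    · exact ⟨1, h⟩
    · exact ⟨2, h⟩
  -- a bridge outside column 1 survives
  obtain ⟨z, hz⟩ : ∃ z : Fin 3, ((0 : Fin 5), z) ∉ S := by
    rcases exists_not_mem_of_ncard_le_two hS
      (a := ((0 : Fin 5), (0 : Fin 3))) (b := (0, 1)) (c := (0, 2))
      (by decide) (by decide) (by decide) with h | h | h
    · exact ⟨0, h⟩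
    · exact ⟨1, h⟩
    · exact ⟨2, h⟩
  have hy' : ((1 : Fin 5), y) ∈ Sᶜ := hy
  have hz' : ((0 : Fin 5), z) ∈ Sᶜ := hz
  apply connected_of_reach_to (⟨((1 : Fin 5), y), hy'⟩ : ↥Sᶜ)
  rintro ⟨⟨x, w⟩, hxw⟩
  by_cases hx1 : x = 1
  · subst hx1
    -- go through the bridge (0, z)
    have h1 : ((lexProd Gex₁ Gex₂).induce Sᶜ).Adj ⟨(1, w), hxw⟩ ⟨(0, z), hz'⟩ :=
      Or.inl (gex₁_hub 0 (by decide))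
    have h2 : ((lexProd Gex₁ Gex₂).induce Sᶜ).Adj ⟨(0, z), hz'⟩ ⟨(1, y), hy'⟩ :=
      Or.inl (gex₁_hub 0 (by decide)).symm
    exact h1.reachable.trans h2.reachable
  · exact SimpleGraph.Adj.reachable (Or.inl (gex₁_hub x hx1).symm)

lemma lex_kappa : graphConnectivity (lexProd Gex₁ Gex₂) = 3 := by
  have hmem : 3 ∈ {n | ∃ S : Set (Fin 5 × Fin 3),
      IsVertexCut (lexProd Gex₁ Gex₂) S ∧ S.ncard = n} :=
    ⟨Slex, lex_cut, Slex_ncard⟩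
  refine le_antisymm (Nat.sInf_le hmem) (le_csInf ⟨3, hmem⟩ ?_)
  rintro n ⟨S, hcut, rfl⟩
  by_contra hn
  push_neg at hn
  have hS2 : S.ncard ≤ 2 := by omega
  rcases hcut with ⟨-, hnc⟩ | ⟨v, hv⟩
  · exact hnc (lex_small_connected S hS2)
  · -- Sᶜ = {v} forces S.ncard = 14
    have hcard : Sᶜ.ncard = 1 := hv ▸ Set.ncard_singleton v
    have htot := Set.ncard_add_ncard_compl S
    have huniv : Nat.card (Fin 5 × Fin 3) = 15 := by
      rw [Nat.card_eq_fintype_card, Fintype.card_prod, Fintype.card_fin, Fintype.card_fin]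
    omega

lemma lex_min_cut : IsMinVertexCut (lexProd Gex₁ Gex₂) Slex :=
  ⟨lex_cut, by rw [lex_kappa]; exact Slex_ncard⟩

lemma lex_no_iso : ∀ v ∉ Slex, ∃ w ∉ Slex, (lexProd Gex₁ Gex₂).Adj v w := by
  rintro ⟨x, y⟩ hv
  rw [mem_Slex_iff] at hv
  obtain ⟨b, hb, hadj⟩ := gex₁_partner x hv
  exact ⟨(b, y), fun hmem => hb ((mem_Slex_iff _).mp hmem), Or.inl hadj⟩

lemma lex_not_super : ¬ SuperConnected (lexProd Gex₁ Gex₂) := by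
  intro h
  obtain ⟨v, hv, hiso⟩ := h _ lex_min_cut
  obtain ⟨w, hw, hadj⟩ := lex_no_iso v hv
  exact hiso w hw hadj

end Aux

/-- A connected non-complete graph G₁ that is not super connected, and a disconnected
graph G₂ with an isolated vertex, such that G₁∘G₂ is not super connected: the set
`{(x₂,y₁), (x₂,y₂), (x₂,y₃)} = {x₂} × V(G₂)` is a minimum vertex-cut of G₁∘G₂ that
isolates no vertex. -/
theorem example_not_superConnected :
    Gex₁.Connected ∧ Gex₁ ≠ ⊤ ∧ ¬ SuperConnected Gex₁ ∧
    ¬ Gex₂.Connected ∧ (isoSet Gex₂).Nonempty ∧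
    IsMinVertexCut (lexProd Gex₁ Gex₂) ({1} ×ˢ (Set.univ : Set (Fin 3))) ∧
    (∀ v ∉ ({1} ×ˢ (Set.univ : Set (Fin 3)) : Set (Fin 5 × Fin 3)),
      ∃ w ∉ ({1} ×ˢ (Set.univ : Set (Fin 3)) : Set (Fin 5 × Fin 3)),
        (lexProd Gex₁ Gex₂).Adj v w) ∧
    ¬ SuperConnected (lexProd Gex₁ Gex₂) := by
  refine ⟨gex₁_connected, ?_, gex₁_not_super, gex₂_not_connected,
    ⟨2, gex₂_iso⟩, lex_min_cut, lex_no_iso, lex_not_super⟩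
  intro h
  have : Gex₁.Adj 0 3 := by rw [h]; simp
  exact absurd this (by decide)
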